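/- arXiv:1201.5990 — 3 statements merged into one kernel-verified Lean document; each statement's English description precedes it below -/
import Mathlib

section
/- Let g : ℝˢ × ℝˢ → ℝ be twice continuously differentiable and let ℓ : ℝˢ → ℝ be differentiable. Suppose that for every θ ∈ ℝˢ the gradient of ℓ at θ equals the partial gradient of g with respect to its first argument evaluated at (θ, θ), i.e. ∇ℓ(θ) = ∂₁g(θ, θ̄)|_{θ̄=θ}. Then the Hessian of ℓ satisfies, for every θ, ∇²ℓ(θ) = ∂²g/∂θ∂θᵀ(θ, θ̄)|_{θ̄=θ} + ∂²g/∂θ̄∂θᵀ(θ, θ̄)|_{θ̄=θ}. (This is the general form of the Oakes identity: the observed information matrix is J(θ) = −(∂²Q/∂θ∂θᵀ + ∂²Q/∂θ̄∂θᵀ)|_{θ̄=θ}.) -/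
/-- **Oakes' identity, general form.**  If `g(θ, θ̄)` plays the role of the EM quantity
`Q(θ|θ̄)` and `ℓ` is the observed-data log-likelihood, and the EM score identity
`∇ℓ(θ) = ∂₁g(θ, θ̄)|_{θ̄ = θ}` holds for every `θ`, then the Hessian of `ℓ` is the sum of the
two second-derivative blocks of `g` evaluated on the diagonal `θ̄ = θ`. -/
theorem oakes_identity_general (s : ℕ)
    (g : (Fin s → ℝ) × (Fin s → ℝ) → ℝ) (ℓ : (Fin s → ℝ) → ℝ)
    (hg : ContDiff ℝ 2 g) (hℓ : Differentiable ℝ ℓ)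
    (hscore : ∀ θ : Fin s → ℝ, fderiv ℝ ℓ θ = fderiv ℝ (fun x => g (x, θ)) θ) :
    ∀ θ : Fin s → ℝ,
      fderiv ℝ (fun x => fderiv ℝ ℓ x) θ
        = fderiv ℝ (fun x => fderiv ℝ (fun x' => g (x', θ)) x) θ
          + fderiv ℝ (fun xb => fderiv ℝ (fun x' => g (x', xb)) θ) θ := by
  intro θ
  set Φ : (Fin s → ℝ) × (Fin s → ℝ) → ((Fin s → ℝ) →L[ℝ] ℝ) :=
    fun p => (fderiv ℝ g p).comp (ContinuousLinearMap.inl ℝ (Fin s → ℝ) (Fin s → ℝ)) with hΦ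
  have hgdiff : Differentiable ℝ g := hg.differentiable two_ne_zero
  have hpart : ∀ x y : Fin s → ℝ, fderiv ℝ (fun x' => g (x', y)) x = Φ (x, y) := by
    intro x y
    have h1 : HasFDerivAt (fun x' : Fin s → ℝ => (x', y))
        ((ContinuousLinearMap.id ℝ (Fin s → ℝ)).prod 0) x :=
      HasFDerivAt.prodMk (hasFDerivAt_id x) (hasFDerivAt_const y x)
    have h3 : HasFDerivAt (g ∘ fun x' : Fin s → ℝ => (x', y))
        ((fderiv ℝ g (x, y)).comp ((ContinuousLinearMap.id ℝ (Fin s → ℝ)).prod 0)) x :=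
      (hgdiff (x, y)).hasFDerivAt.comp x h1
    have heq : ((ContinuousLinearMap.id ℝ (Fin s → ℝ)).prod 0 :
        (Fin s → ℝ) →L[ℝ] (Fin s → ℝ) × (Fin s → ℝ))
        = ContinuousLinearMap.inl ℝ (Fin s → ℝ) (Fin s → ℝ) := by
      ext v <;> rfl
    have h4 : HasFDerivAt (fun x' : Fin s → ℝ => g (x', y)) (Φ (x, y)) x := by
      rw [hΦ, ← heq]; exact h3
    exact h4.fderiv
  have hΦdiff : Differentiable ℝ Φ := by
    have h1 : ContDiff ℝ 1 (fderiv ℝ g) := hg.fderiv_right (by norm_num)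
    exact fun p => (((ContinuousLinearMap.compL ℝ (Fin s → ℝ)
        ((Fin s → ℝ) × (Fin s → ℝ)) ℝ).flip
        (ContinuousLinearMap.inl ℝ (Fin s → ℝ) (Fin s → ℝ))).differentiable.comp
        (h1.differentiable one_ne_zero)) p
  have hΦd : HasFDerivAt Φ (fderiv ℝ Φ (θ, θ)) (θ, θ) := (hΦdiff (θ, θ)).hasFDerivAt
  set D := fderiv ℝ Φ (θ, θ) with hD
  have hℓ' : (fun x => fderiv ℝ ℓ x) = fun x => Φ (x, x) := by
    funext x; rw [hscore x, hpart x x]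
  have hdiag : HasFDerivAt (fun x : Fin s → ℝ => (x, x))
      ((ContinuousLinearMap.id ℝ (Fin s → ℝ)).prod (ContinuousLinearMap.id ℝ (Fin s → ℝ))) θ :=
    HasFDerivAt.prodMk (hasFDerivAt_id θ) (hasFDerivAt_id θ)
  have hLHS : fderiv ℝ (fun x => fderiv ℝ ℓ x) θ
      = D.comp ((ContinuousLinearMap.id ℝ (Fin s → ℝ)).prod
          (ContinuousLinearMap.id ℝ (Fin s → ℝ))) := by
    rw [hℓ']
    have hc : HasFDerivAt (Φ ∘ fun x : Fin s → ℝ => (x, x))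
        (D.comp ((ContinuousLinearMap.id ℝ (Fin s → ℝ)).prod
          (ContinuousLinearMap.id ℝ (Fin s → ℝ)))) θ := hΦd.comp (f := fun x => (x, x)) θ hdiag
    exact hc.fderiv
  have h1 : HasFDerivAt (fun x : Fin s → ℝ => (x, θ))
      ((ContinuousLinearMap.id ℝ (Fin s → ℝ)).prod 0) θ :=
    HasFDerivAt.prodMk (hasFDerivAt_id θ) (hasFDerivAt_const θ θ)
  have hR1 : fderiv ℝ (fun x => fderiv ℝ (fun x' => g (x', θ)) x) θ
      = D.comp ((ContinuousLinearMap.id ℝ (Fin s → ℝ)).prod 0) := by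
    have he : (fun x => fderiv ℝ (fun x' => g (x', θ)) x) = fun x => Φ (x, θ) := by
      funext x; exact hpart x θ
    rw [he]
    have hc : HasFDerivAt (Φ ∘ fun x : Fin s → ℝ => (x, θ))
        (D.comp ((ContinuousLinearMap.id ℝ (Fin s → ℝ)).prod 0)) θ := hΦd.comp (f := fun x => (x, θ)) θ h1
    exact hc.fderiv
  have h2 : HasFDerivAt (fun y : Fin s → ℝ => (θ, y))
      ((0 : (Fin s → ℝ) →L[ℝ] (Fin s → ℝ)).prod (ContinuousLinearMap.id ℝ (Fin s → ℝ))) θ :=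
    HasFDerivAt.prodMk (hasFDerivAt_const θ θ) (hasFDerivAt_id θ)
  have hR2 : fderiv ℝ (fun xb => fderiv ℝ (fun x' => g (x', xb)) θ) θ
      = D.comp ((0 : (Fin s → ℝ) →L[ℝ] (Fin s → ℝ)).prod
          (ContinuousLinearMap.id ℝ (Fin s → ℝ))) := by
    have he : (fun xb => fderiv ℝ (fun x' => g (x', xb)) θ) = fun xb => Φ (θ, xb) := by
      funext xb; exact hpart θ xb
    rw [he]
    have hc : HasFDerivAt (Φ ∘ fun y : Fin s → ℝ => (θ, y))
        (D.comp ((0 : (Fin s → ℝ) →L[ℝ] (Fin s → ℝ)).prod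
          (ContinuousLinearMap.id ℝ (Fin s → ℝ)))) θ := hΦd.comp (f := fun y => (θ, y)) θ h2
    exact hc.fderiv
  rw [hLHS, hR1, hR2]
  ext v w
  have hsplit : ((v, v) : (Fin s → ℝ) × (Fin s → ℝ)) = (v, 0) + (0, v) := by simp
  simp only [ContinuousLinearMap.comp_apply, ContinuousLinearMap.prod_apply,
    ContinuousLinearMap.id_apply, ContinuousLinearMap.add_apply,
    ContinuousLinearMap.zero_apply]
  rw [hsplit, map_add]
  simp
end

section
/- Let U be a nonempty finite set and for each u ∈ U let p_u : ℝˢ → ℝ be a differentiable function with p_u(θ) > 0 for all θ. Define ℓ(θ) = log (Σ_{u∈U} p_u(θ)) and Q(θ | θ̄) = Σ_{u∈U} (p_u(θ̄) / Σ_{u'∈U} p_{u'}(θ̄)) · log p_u(θ). Then for every θ, the gradient of Q(· | θ̄) with respect to its first argument, evaluated at θ̄ = θ, equals the gradient of ℓ at θ: ∂Q(θ|θ̄)/∂θ |_{θ̄=θ} = ∇ℓ(θ). -/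
/-- **EM score identity for a finite latent variable.**  With `p u θ` the complete-data
likelihood of latent value `u` together with the observed data, `ℓ(θ) = log ∑ᵤ pᵤ(θ)` the
observed-data log-likelihood, and `Q(θ|θ̄) = ∑ᵤ (pᵤ(θ̄)/∑ᵤ' pᵤ'(θ̄)) log pᵤ(θ)` the EM
expected complete-data log-likelihood, the gradient of `Q(·|θ̄)` at `θ̄ = θ` equals the
gradient of `ℓ` at `θ`. -/
theorem em_score_identity (s : ℕ) (U : Type*) [Fintype U] [Nonempty U]
    (p : U → (Fin s → ℝ) → ℝ)
    (hdiff : ∀ u, Differentiable ℝ (p u))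
    (hpos : ∀ u θ, 0 < p u θ) :
    ∀ θ : Fin s → ℝ,
      fderiv ℝ (fun x => ∑ u, (p u θ / ∑ u', p u' θ) * Real.log (p u x)) θ
        = fderiv ℝ (fun x => Real.log (∑ u, p u x)) θ := by
  intro θ
  have hS : (0 : ℝ) < ∑ u', p u' θ := Finset.sum_pos (fun u _ => hpos u θ) Finset.univ_nonempty
  have h1 : HasFDerivAt (fun x => ∑ u, (p u θ / ∑ u', p u' θ) * Real.log (p u x))
      (∑ u, (∑ u', p u' θ)⁻¹ • fderiv ℝ (p u) θ) θ := by
    apply HasFDerivAt.fun_sum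
    intro u _
    have hp : HasFDerivAt (p u) (fderiv ℝ (p u) θ) θ := ((hdiff u) θ).hasFDerivAt
    have hlog : HasFDerivAt (fun x => Real.log (p u x)) ((p u θ)⁻¹ • fderiv ℝ (p u) θ) θ :=
      hp.log (hpos u θ).ne'
    have h := hlog.const_mul (p u θ / ∑ u', p u' θ)
    have heq : (p u θ / ∑ u', p u' θ) • ((p u θ)⁻¹ • fderiv ℝ (p u) θ)
        = (∑ u', p u' θ)⁻¹ • fderiv ℝ (p u) θ := by
      rw [smul_smul]
      congr 1
      rw [div_mul_eq_mul_div, mul_inv_cancel₀ (hpos u θ).ne', one_div]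
    rwa [heq] at h
  have h2 : HasFDerivAt (fun x => Real.log (∑ u, p u x))
      ((∑ u', p u' θ)⁻¹ • ∑ u, fderiv ℝ (p u) θ) θ := by
    have hp : HasFDerivAt (fun x => ∑ u, p u x) (∑ u, fderiv ℝ (p u) θ) θ :=
      HasFDerivAt.fun_sum (fun u _ => ((hdiff u) θ).hasFDerivAt)
    exact hp.log hS.ne'
  rw [h1.fderiv, h2.fderiv, Finset.smul_sum]
end

section
/- Let U be a nonempty finite set and for each u ∈ U let p_u : ℝˢ → ℝ be twice continuously differentiable with p_u(θ) > 0 for all θ. Define ℓ(θ) = log (Σ_{u∈U} p_u(θ)) and Q(θ | θ̄) = Σ_{u∈U} (p_u(θ̄)/Σ_{u'} p_{u'}(θ̄)) · log p_u(θ). Then the Hessian of ℓ satisfies the Oakes identity: for every θ, ∇²ℓ(θ) = ∂²Q(θ|θ̄)/∂θ∂θᵀ |_{θ̄=θ} + ∂²Q(θ|θ̄)/∂θ̄∂θᵀ |_{θ̄=θ}; equivalently the observed information matrix is J(θ) = −(∂²Q/∂θ∂θᵀ + ∂²Q/∂θ̄∂θᵀ)|_{θ̄=θ}. -/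
open ContinuousLinearMap


/-- **Oakes' identity for a finite latent variable model.**  With `p u θ` the complete-data
likelihood of latent value `u` together with the observed data, `ℓ(θ) = log ∑ᵤ pᵤ(θ)` the
observed-data log-likelihood, and `Q(θ|θ̄) = ∑ᵤ (pᵤ(θ̄)/∑ᵤ' pᵤ'(θ̄)) log pᵤ(θ)` the EM
expected complete-data log-likelihood, the Hessian of `ℓ` at `θ` equals
`∂²Q/∂θ∂θᵀ|_{θ̄=θ} + ∂²Q/∂θ̄∂θᵀ|_{θ̄=θ}`; equivalently the observed information matrix is
`J(θ) = −(∂²Q/∂θ∂θᵀ + ∂²Q/∂θ̄∂θᵀ)|_{θ̄=θ}`. -/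
theorem em_oakes_identity (s : ℕ) (U : Type*) [Fintype U] [Nonempty U]
    (p : U → (Fin s → ℝ) → ℝ)
    (hsmooth : ∀ u, ContDiff ℝ 2 (p u))
    (hpos : ∀ u θ, 0 < p u θ) :
    ∀ θ : Fin s → ℝ,
      fderiv ℝ (fun x => fderiv ℝ (fun x' => Real.log (∑ u, p u x')) x) θ
        = fderiv ℝ (fun x =>
            fderiv ℝ (fun x' => ∑ u, (p u θ / ∑ u', p u' θ) * Real.log (p u x')) x) θ
          + fderiv ℝ (fun xb =>
              fderiv ℝ (fun x' => ∑ u, (p u xb / ∑ u', p u' xb) * Real.log (p u x')) θ) θ := by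
  intro θ
  have hS : ∀ x, (0:ℝ) < ∑ u, p u x := fun x =>
    Finset.sum_pos (fun u _ => hpos u x) Finset.univ_nonempty
  have hSne : ∀ x, (∑ u, p u x) ≠ 0 := fun x => (hS x).ne'
  have hpne : ∀ u x, p u x ≠ 0 := fun u x => (hpos u x).ne'
  have hd : ∀ u, Differentiable ℝ (p u) := fun u => (hsmooth u).differentiable two_ne_zero
  set F : (Fin s → ℝ) → (Fin s → ℝ) → ((Fin s → ℝ) →L[ℝ] ℝ) :=
    fun a b => ∑ u, (p u a / ∑ u', p u' a) • ((p u b)⁻¹ • fderiv ℝ (p u) b) with hF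
  -- (A) inner derivative of Q
  have hQ : ∀ a b, fderiv ℝ (fun x' => ∑ u, (p u a / ∑ u', p u' a) * Real.log (p u x')) b
      = F a b := by
    intro a b
    have : HasFDerivAt (fun x' => ∑ u, (p u a / ∑ u', p u' a) * Real.log (p u x'))
        (F a b) b := by
      refine HasFDerivAt.fun_sum fun u _ => ?_
      exact (((hd u b).hasFDerivAt).log (hpne u b)).const_mul _
    exact this.fderiv
  -- (B) derivative of ℓ equals F x x
  have hL : ∀ x, fderiv ℝ (fun x' => Real.log (∑ u, p u x')) x = F x x := by
    intro x
    have hSd : HasFDerivAt (fun x' => ∑ u, p u x') (∑ u, fderiv ℝ (p u) x) x :=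
      HasFDerivAt.fun_sum fun u _ => (hd u x).hasFDerivAt
    have h1 : fderiv ℝ (fun x' => Real.log (∑ u, p u x')) x
        = (∑ u, p u x)⁻¹ • ∑ u, fderiv ℝ (p u) x := (hSd.log (hSne x)).fderiv
    rw [h1, hF, Finset.smul_sum]
    refine Finset.sum_congr rfl fun u _ => ?_
    rw [smul_smul]
    congr 1
    rw [div_mul_eq_mul_div, mul_comm, div_eq_mul_inv, inv_mul_cancel₀ (hpne u x), one_mul]
  -- Φ on the product space
  set Φ : ((Fin s → ℝ) × (Fin s → ℝ)) → ((Fin s → ℝ) →L[ℝ] ℝ) :=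
    fun q => F q.1 q.2 with hΦdef
  have hΦ : DifferentiableAt ℝ Φ (θ, θ) := by
    refine DifferentiableAt.fun_sum fun u _ => ?_
    have hg1 : DifferentiableAt ℝ (fun a => p u a / ∑ u', p u' a) θ := by
      have := DifferentiableAt.mul (hd u θ)
        (DifferentiableAt.inv (DifferentiableAt.fun_sum fun u' _ => hd u' θ) (hSne θ))
      simpa only [← div_eq_mul_inv, Pi.div_def] using this
    have hg : DifferentiableAt ℝ (fun q : (Fin s → ℝ) × (Fin s → ℝ) =>
        p u q.1 / ∑ u', p u' q.1) (θ, θ) :=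
      hg1.comp (θ, θ) (f := Prod.fst) differentiableAt_fst
    have hfd : Differentiable ℝ (fun b => fderiv ℝ (p u) b) :=
      ((hsmooth u).fderiv_right (m := 1) (by norm_num)).differentiable one_ne_zero
    have hh1 : DifferentiableAt ℝ (fun b => (p u b)⁻¹ • fderiv ℝ (p u) b) θ :=
      DifferentiableAt.smul ((hd u θ).inv (hpne u θ)) (hfd θ)
    have hh : DifferentiableAt ℝ (fun q : (Fin s → ℝ) × (Fin s → ℝ) =>
        (p u q.2)⁻¹ • fderiv ℝ (p u) q.2) (θ, θ) :=
      hh1.comp (θ, θ) (f := Prod.snd) differentiableAt_snd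
    exact hg.smul hh
  set D := fderiv ℝ Φ (θ, θ) with hD
  have hdiag : HasFDerivAt (fun x : Fin s → ℝ => Φ (x, x))
      (D.comp ((ContinuousLinearMap.id ℝ (Fin s → ℝ)).prod
        (ContinuousLinearMap.id ℝ (Fin s → ℝ)))) θ :=
    HasFDerivAt.comp (f := fun x : Fin s → ℝ => (x, x)) θ hΦ.hasFDerivAt
      ((hasFDerivAt_id θ).prodMk (hasFDerivAt_id θ))
  have h2 : HasFDerivAt (fun x : Fin s → ℝ => Φ (θ, x))
      (D.comp (inr ℝ (Fin s → ℝ) (Fin s → ℝ))) θ :=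
    HasFDerivAt.comp (f := fun x : Fin s → ℝ => (θ, x)) θ hΦ.hasFDerivAt
      (hasFDerivAt_prodMk_right θ θ)
  have h1 : HasFDerivAt (fun x : Fin s → ℝ => Φ (x, θ))
      (D.comp (inl ℝ (Fin s → ℝ) (Fin s → ℝ))) θ :=
    HasFDerivAt.comp (f := fun x : Fin s → ℝ => (x, θ)) θ hΦ.hasFDerivAt
      (hasFDerivAt_prodMk_left θ θ)
  have hsplit : D.comp ((ContinuousLinearMap.id ℝ (Fin s → ℝ)).prod
        (ContinuousLinearMap.id ℝ (Fin s → ℝ)))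
      = D.comp (inr ℝ (Fin s → ℝ) (Fin s → ℝ)) + D.comp (inl ℝ (Fin s → ℝ) (Fin s → ℝ)) := by
    refine ContinuousLinearMap.ext fun v => ?_
    simp only [ContinuousLinearMap.comp_apply, ContinuousLinearMap.prod_apply,
      ContinuousLinearMap.id_apply, ContinuousLinearMap.add_apply, inl_apply, inr_apply]
    rw [← map_add]
    norm_num
  have e1 : (fun x => fderiv ℝ (fun x' => Real.log (∑ u, p u x')) x)
      = fun x => Φ (x, x) := funext fun x => hL x
  have e2 : (fun x => fderiv ℝ (fun x' => ∑ u, (p u θ / ∑ u', p u' θ) * Real.log (p u x')) x)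
      = fun x => Φ (θ, x) := funext fun x => hQ θ x
  have e3 : (fun xb => fderiv ℝ (fun x' => ∑ u, (p u xb / ∑ u', p u' xb) * Real.log (p u x')) θ)
      = fun xb => Φ (xb, θ) := funext fun xb => hQ xb θ
  rw [e1, e2, e3, hdiag.fderiv, h2.fderiv, h1.fderiv, hsplit]
end
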